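/- For all real numbers $M_1, M_2 \geq 0$ and all $\alpha > 0$, one has $(M_1^{\alpha+1} - M_2^{\alpha+1})(M_1 - M_2) \geq \frac{\alpha+1}{(1+\alpha/2)^2} \left(M_1^{1+\alpha/2} - M_2^{1+\alpha/2}\right)^2$. -/

import Mathlib

open Real MeasureTheory

/-- Cauchy–Schwarz step: for `0 ≤ y ≤ x` and `1 ≤ β`,
`(x^β - y^β)^2 * (2β - 1) ≤ β^2 * ((x^(2β-1) - y^(2β-1)) * (x - y))`. -/
lemma key_cs {y x β : ℝ} (hy : 0 ≤ y) (hxy : y ≤ x) (hβ : 1 ≤ β) :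
    (x ^ β - y ^ β) ^ 2 * (2 * β - 1) ≤
      β ^ 2 * ((x ^ (2 * β - 1) - y ^ (2 * β - 1)) * (x - y)) := by
  have hβ0 : (0 : ℝ) < β := lt_of_lt_of_le one_pos hβ
  have h2β : (0 : ℝ) < 2 * β - 1 := by linarith
  have hx : 0 ≤ x := hy.trans hxy
  set μ := volume.restrict (Set.Ioc y x) with hμ
  haveI : IsFiniteMeasure μ := ⟨by
    rw [hμ, Measure.restrict_apply_univ, Real.volume_Ioc]
    exact ENNReal.ofReal_lt_top⟩
  have hmem : ∀ᵐ t ∂μ, t ∈ Set.Ioc y x := ae_restrict_mem measurableSet_Ioc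
  have hf_meas : AEStronglyMeasurable (fun t : ℝ => t ^ (β - 1)) μ :=
    (Real.continuous_rpow_const (by linarith)).aestronglyMeasurable
  have hf_nonneg : 0 ≤ᵐ[μ] fun t : ℝ => t ^ (β - 1) := by
    filter_upwards [hmem] with t ht
    exact Real.rpow_nonneg (hy.trans ht.1.le) _
  have hf : MemLp (fun t : ℝ => t ^ (β - 1)) (ENNReal.ofReal 2) μ := by
    apply MemLp.of_bound hf_meas (x ^ (β - 1))
    filter_upwards [hmem] with t ht
    rw [Real.norm_of_nonneg (Real.rpow_nonneg (hy.trans ht.1.le) _)]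
    exact Real.rpow_le_rpow (hy.trans ht.1.le) ht.2 (by linarith)
  have hg : MemLp (fun _ : ℝ => (1 : ℝ)) (ENNReal.ofReal 2) μ := memLp_const _
  have hpq : Real.HolderConjugate 2 2 := by
    rw [Real.holderConjugate_iff]; norm_num
  have hcs := MeasureTheory.integral_mul_le_Lp_mul_Lq_of_nonneg hpq hf_nonneg
    (Filter.Eventually.of_forall fun _ => zero_le_one) hf hg
  -- compute the three integrals
  have hI1 : (∫ t, (fun t : ℝ => t ^ (β - 1)) t * 1 ∂μ) = (x ^ β - y ^ β) / β := by
    have : (∫ t in y..x, t ^ (β - 1)) = (x ^ β - y ^ β) / β := by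
      rw [integral_rpow (Or.inl (by linarith : (-1 : ℝ) < β - 1))]
      norm_num
    rw [← this, intervalIntegral.integral_of_le hxy]
    simp [hμ]
  have hI2 : (∫ t, (fun t : ℝ => t ^ (β - 1)) t ^ (2 : ℝ) ∂μ)
      = (x ^ (2 * β - 1) - y ^ (2 * β - 1)) / (2 * β - 1) := by
    have hcong : (∫ t, (fun t : ℝ => t ^ (β - 1)) t ^ (2 : ℝ) ∂μ)
        = ∫ t, t ^ ((β - 1) * 2) ∂μ := by
      refine integral_congr_ae ?_
      filter_upwards [hmem] with t ht
      rw [← Real.rpow_mul (hy.trans ht.1.le)]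
    have : (∫ t in y..x, t ^ ((β - 1) * 2)) =
        (x ^ (2 * β - 1) - y ^ (2 * β - 1)) / (2 * β - 1) := by
      rw [integral_rpow (Or.inl (by nlinarith : (-1 : ℝ) < (β - 1) * 2))]
      have h1 : (β - 1) * 2 + 1 = 2 * β - 1 := by ring
      rw [h1]
    rw [hcong, ← this, intervalIntegral.integral_of_le hxy]
  have hI3 : (∫ _ : ℝ, (1 : ℝ) ^ (2 : ℝ) ∂μ) = x - y := by
    simp only [Real.one_rpow]
    rw [integral_const, smul_eq_mul, mul_one, hμ, measureReal_def, Measure.restrict_apply_univ,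
      Real.volume_Ioc, ENNReal.toReal_ofReal (by linarith)]
  rw [hI1, hI2, hI3] at hcs
  set B := (x ^ (2 * β - 1) - y ^ (2 * β - 1)) / (2 * β - 1) with hB
  have hBnn : 0 ≤ B := by
    apply div_nonneg _ h2β.le
    have := Real.rpow_le_rpow hy hxy (le_of_lt h2β)
    linarith
  have hCnn : (0 : ℝ) ≤ x - y := by linarith
  have hAnn : 0 ≤ (x ^ β - y ^ β) / β := by
    apply div_nonneg _ hβ0.le
    have := Real.rpow_le_rpow hy hxy hβ0.le
    linarith
  have hsq : ((x ^ β - y ^ β) / β) ^ 2 ≤ (B ^ ((1 : ℝ) / 2) * (x - y) ^ ((1 : ℝ) / 2)) ^ 2 :=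
    pow_le_pow_left₀ hAnn hcs 2
  have hB2 : (B ^ ((1 : ℝ) / 2)) ^ 2 = B := by
    rw [← Real.rpow_natCast (B ^ ((1 : ℝ) / 2)) 2, ← Real.rpow_mul hBnn]
    norm_num
  have hC2 : ((x - y) ^ ((1 : ℝ) / 2)) ^ 2 = x - y := by
    rw [← Real.rpow_natCast ((x - y) ^ ((1 : ℝ) / 2)) 2, ← Real.rpow_mul hCnn]
    norm_num
  rw [mul_pow, hB2, hC2] at hsq
  rw [div_pow] at hsq
  rw [div_le_iff₀ (by positivity)] at hsq
  rw [hB] at hsq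
  have hβ2 : (0 : ℝ) < β ^ 2 := by positivity
  calc (x ^ β - y ^ β) ^ 2 * (2 * β - 1)
      ≤ ((x ^ (2 * β - 1) - y ^ (2 * β - 1)) / (2 * β - 1) * (x - y) * β ^ 2) * (2 * β - 1) := by
        apply mul_le_mul_of_nonneg_right hsq h2β.le
    _ = β ^ 2 * ((x ^ (2 * β - 1) - y ^ (2 * β - 1)) * (x - y)) := by
        field_simp

lemma main_ineq {y x α : ℝ} (hy : 0 ≤ y) (hxy : y ≤ x) (hα : 0 < α) :
    (α + 1) / (1 + α / 2) ^ 2 * (x ^ (1 + α / 2) - y ^ (1 + α / 2)) ^ 2 ≤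
      (x ^ (α + 1) - y ^ (α + 1)) * (x - y) := by
  have hβ : (1 : ℝ) ≤ 1 + α / 2 := by linarith
  have hkey := key_cs hy hxy hβ
  have h1 : 2 * (1 + α / 2) - 1 = α + 1 := by ring
  rw [h1] at hkey
  have hpos : (0 : ℝ) < (1 + α / 2) ^ 2 := by positivity
  rw [div_mul_eq_mul_div, div_le_iff₀ hpos]
  nlinarith [hkey]

theorem stmt_0 (M₁ M₂ α : ℝ) (hM₁ : 0 ≤ M₁) (hM₂ : 0 ≤ M₂) (hα : 0 < α) :
    (M₁ ^ (α + 1) - M₂ ^ (α + 1)) * (M₁ - M₂) ≥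
      (α + 1) / (1 + α / 2) ^ 2 * (M₁ ^ (1 + α / 2) - M₂ ^ (1 + α / 2)) ^ 2 := by
  rcases le_total M₂ M₁ with h | h
  · exact main_ineq hM₂ h hα
  · have h2 := main_ineq hM₁ h hα
    have e1 : (M₂ ^ (α + 1) - M₁ ^ (α + 1)) * (M₂ - M₁) =
        (M₁ ^ (α + 1) - M₂ ^ (α + 1)) * (M₁ - M₂) := by ring
    have e2 : (M₂ ^ (1 + α / 2) - M₁ ^ (1 + α / 2)) ^ 2 =
        (M₁ ^ (1 + α / 2) - M₂ ^ (1 + α / 2)) ^ 2 := by ring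
    rw [e1, e2] at h2
    exact h2
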